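/- Let μ > 0, m > 0 and let ξ ∈ L²(ℝ^{3N}). Define (G_μ ξ_i)^(k₀, k⃗) = ((1/(2m))k₀² + (1/2)|k⃗|² + μ)^{-1} ξ̂(k₀ + k_i, k̂_i), where k̂_i omits the i-th coordinate. Then ‖G_μ ξ_i‖²_{L²(ℝ^{3(N+1)})} = π² (2m/(m+1))^{3/2} ∫_{ℝ^{3N}} |ξ̂(k_i, k̂_i)|² (k_i²/(2(1+m)) + (1/2)|k̂_i|² + μ)^{-1/2} dk⃗. In particular ‖G_μ ξ_i‖² ≤ π² (2m/(m+1))^{3/2} μ^{-1/2} ‖ξ‖²_{L²(ℝ^{3N})}. -/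

import Mathlib

open MeasureTheory Set Filter Real
open scoped ENNReal

local notation "E3" => EuclideanSpace ℝ (Fin 3)

lemma aux1d {c γ : ℝ} (hc : 0 < c) (hγ : 0 < γ) :
    ∫ y in Set.Ioi (0:ℝ), y ^ 2 * ((c * y ^ 2 + γ)⁻¹) ^ 2 =
      Real.pi / 4 * ((Real.sqrt c)⁻¹ ^ 3 * (Real.sqrt γ)⁻¹) := by
  have hsc : Real.sqrt c ^ 2 = c := Real.sq_sqrt hc.le
  have hsγ : Real.sqrt γ ^ 2 = γ := Real.sq_sqrt hγ.le
  have hscpos : 0 < Real.sqrt c := Real.sqrt_pos.2 hc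
  have hsγpos : 0 < Real.sqrt γ := Real.sqrt_pos.2 hγ
  set b : ℝ := Real.sqrt c / Real.sqrt γ with hb
  have hbpos : 0 < b := div_pos hscpos hsγpos
  have hb2 : b ^ 2 = c / γ := by rw [hb, div_pow, hsc, hsγ]
  set F : ℝ → ℝ := fun y => (1 / (2 * b * γ * c)) * Real.arctan (b * y)
      - y / (2 * c * (c * y ^ 2 + γ)) with hF
  have hpos : ∀ y : ℝ, 0 < c * y ^ 2 + γ := fun y => by positivity
  have hderiv : ∀ y ∈ Set.Ici (0:ℝ), HasDerivAt F (y ^ 2 * ((c * y ^ 2 + γ)⁻¹) ^ 2) y := by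
    intro y _
    have h1 : HasDerivAt (fun y : ℝ => Real.arctan (b * y)) ((1 + (b*y)^2)⁻¹ * b) y := by
      exact ((Real.hasDerivAt_arctan (b * y)).comp y ((hasDerivAt_id y).const_mul b)).congr_deriv (by simp)
    have h2 : HasDerivAt (fun y : ℝ => 2 * c * (c * y ^ 2 + γ)) (2 * c * (c * (2 * y))) y := by
      have : HasDerivAt (fun y : ℝ => c * y ^ 2 + γ) (c * (2 * y)) y := by
        simpa using ((hasDerivAt_pow 2 y).const_mul c).add_const γ
      simpa using this.const_mul (2 * c)
    have h3 : HasDerivAt (fun y : ℝ => y / (2 * c * (c * y ^ 2 + γ)))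
        ((1 * (2 * c * (c * y ^ 2 + γ)) - y * (2 * c * (c * (2 * y)))) /
          (2 * c * (c * y ^ 2 + γ)) ^ 2) y :=
      (hasDerivAt_id y).div h2 (by positivity)
    have := ((h1.const_mul (1 / (2 * b * γ * c))).sub h3)
    refine this.congr_deriv ?_
    have h4 : 1 + (b * y) ^ 2 = (c * y ^ 2 + γ) / γ := by
      rw [mul_pow, hb2, div_mul_eq_mul_div, one_add_div hγ.ne']; ring
    rw [h4]
    have h5 := (hpos y).ne'
    field_simp [hb]
    ring
  have hint : IntegrableOn (fun y : ℝ => y ^ 2 * ((c * y ^ 2 + γ)⁻¹) ^ 2) (Set.Ioi 0) := by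
    set k := min c γ with hk
    have hkpos : 0 < k := lt_min hc hγ
    have hbound : ∀ y : ℝ, ‖y ^ 2 * ((c * y ^ 2 + γ)⁻¹) ^ 2‖ ≤ (k⁻¹) ^ 2 * (1 + y ^ 2)⁻¹ := by
      intro y
      have h1 : k * (1 + y ^ 2) ≤ c * y ^ 2 + γ := by
        have := min_le_left c γ; have := min_le_right c γ
        nlinarith [sq_nonneg y]
      have h3 : (k * (1 + y ^ 2)) ^ 2 ≤ (c * y ^ 2 + γ) ^ 2 := pow_le_pow_left₀ (by positivity) h1 2
      rw [Real.norm_eq_abs, abs_of_nonneg (by positivity)]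
      have e1 : y ^ 2 * ((c * y ^ 2 + γ)⁻¹) ^ 2 = y ^ 2 / (c * y ^ 2 + γ) ^ 2 := by
        rw [inv_pow]; ring
      have e2 : (k⁻¹) ^ 2 * (1 + y ^ 2)⁻¹ = 1 / (k ^ 2 * (1 + y ^ 2)) := by
        rw [inv_pow]; field_simp
      rw [e1, e2, div_le_div_iff₀ (by positivity) (by positivity), one_mul]
      calc y ^ 2 * (k ^ 2 * (1 + y ^ 2)) ≤ (1 + y ^ 2) * (k ^ 2 * (1 + y ^ 2)) :=
            mul_le_mul_of_nonneg_right (by nlinarith) (by positivity)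
        _ = (k * (1 + y ^ 2)) ^ 2 := by ring
        _ ≤ (c * y ^ 2 + γ) ^ 2 := h3
    refine Integrable.mono' (g := fun y => (k⁻¹) ^ 2 * (1 + y ^ 2)⁻¹) ?_ ?_ ?_
    · exact (integrable_inv_one_add_sq.const_mul _).restrict
    · refine Continuous.aestronglyMeasurable ?_ |>.restrict
      exact (continuous_id.pow 2).mul
        ((((continuous_const.mul (continuous_id.pow 2)).add continuous_const).inv₀
          fun y => (hpos y).ne').pow 2)
    · exact Filter.Eventually.of_forall hbound
  have hlim : Filter.Tendsto F Filter.atTop (nhds ((1 / (2 * b * γ * c)) * (Real.pi / 2))) := by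
    have t1 : Filter.Tendsto (fun y : ℝ => (1 / (2 * b * γ * c)) * Real.arctan (b * y))
        Filter.atTop (nhds ((1 / (2 * b * γ * c)) * (Real.pi / 2))) := by
      refine Filter.Tendsto.const_mul _ ?_
      have := (tendsto_nhds_of_tendsto_nhdsWithin Real.tendsto_arctan_atTop)
      exact this.comp (Filter.Tendsto.const_mul_atTop hbpos Filter.tendsto_id)
    have t2 : Filter.Tendsto (fun y : ℝ => y / (2 * c * (c * y ^ 2 + γ)))
        Filter.atTop (nhds 0) := by
      have hub : ∀ᶠ y : ℝ in Filter.atTop, y / (2 * c * (c * y ^ 2 + γ)) ≤ (2 * c ^ 2 * y)⁻¹ := by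
        filter_upwards [Filter.eventually_gt_atTop 0] with y hy
        rw [inv_eq_one_div, div_le_div_iff₀ (by positivity) (by positivity)]
        nlinarith [hpos y]
      have hlb : ∀ᶠ y : ℝ in Filter.atTop, 0 ≤ y / (2 * c * (c * y ^ 2 + γ)) := by
        filter_upwards [Filter.eventually_ge_atTop 0] with y hy
        positivity
      have t3 : Filter.Tendsto (fun y : ℝ => (2 * c ^ 2 * y)⁻¹) Filter.atTop (nhds 0) :=
        Filter.Tendsto.inv_tendsto_atTop
          (Filter.Tendsto.const_mul_atTop (by positivity) Filter.tendsto_id)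
      exact squeeze_zero' hlb hub t3
    simpa only [sub_zero] using t1.sub t2
  have hval := MeasureTheory.integral_Ioi_of_hasDerivAt_of_tendsto' hderiv hint hlim
  have hF0 : F 0 = 0 := by simp [hF]
  have halg : ∀ u v : ℝ, 0 < u → 0 < v →
      1 / (2 * (u / v) * (v ^ 2) * (u ^ 2)) * (Real.pi / 2)
        = Real.pi / 4 * (u⁻¹ ^ 3 * v⁻¹) := by
    intro u v hu hv
    field_simp
    ring
  rw [hval, hF0, sub_zero, hb]
  have goalstep : 1 / (2 * (Real.sqrt c / Real.sqrt γ) * γ * c) * (Real.pi / 2)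
      = 1 / (2 * (Real.sqrt c / Real.sqrt γ) * (Real.sqrt γ ^ 2) * (Real.sqrt c ^ 2))
        * (Real.pi / 2) := by
    rw [hsc, hsγ]
  rw [goalstep]
  exact halg _ _ hscpos hsγpos

lemma aux3d {c γ : ℝ} (hc : 0 < c) (hγ : 0 < γ) :
    ∫⁻ t : EuclideanSpace ℝ (Fin 3), ENNReal.ofReal (((c * ‖t‖ ^ 2 + γ)⁻¹) ^ 2) =
      ENNReal.ofReal (Real.pi ^ 2 * ((Real.sqrt c)⁻¹ ^ 3 * (Real.sqrt γ)⁻¹)) := by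
  set E := EuclideanSpace ℝ (Fin 3)
  have hpos : ∀ y : ℝ, 0 < c * y ^ 2 + γ := fun y => by positivity
  have hfr : Module.finrank ℝ E = 3 := by
    simp [E, finrank_euclideanSpace]
  -- integrability
  have hint : Integrable (fun t : E => ((c * ‖t‖ ^ 2 + γ)⁻¹) ^ 2) := by
    set k := min c γ with hk
    have hkpos : 0 < k := lt_min hc hγ
    have hbd : ∀ t : E, ‖((c * ‖t‖ ^ 2 + γ)⁻¹) ^ 2‖ ≤
        (4 * (k⁻¹) ^ 2) * (1 + ‖t‖) ^ (-(4:ℝ)) := by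
      intro t
      set x := ‖t‖ with hx
      have hx0 : 0 ≤ x := norm_nonneg t
      have h1 : (1 + x) ^ 2 ≤ 2 * (1 + x ^ 2) := by nlinarith [sq_nonneg (1 - x)]
      have h2 : k * (1 + x ^ 2) ≤ c * x ^ 2 + γ := by
        have := min_le_left c γ; have := min_le_right c γ
        nlinarith [sq_nonneg x]
      have h4 : (1 + x) ^ (4:ℝ) = ((1 + x) ^ 2) ^ 2 := by
        rw [show (4:ℝ) = ((4:ℕ):ℝ) by norm_num, Real.rpow_natCast]; ring
      have hrw : (1 + x) ^ (-(4:ℝ)) = (((1 + x) ^ 2) ^ 2)⁻¹ := by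
        rw [Real.rpow_neg (by positivity), h4]
      rw [Real.norm_eq_abs, abs_of_nonneg (by positivity), hrw]
      rw [inv_pow, ← inv_pow]
      have e1 : ((c * x ^ 2 + γ) ^ 2)⁻¹ = 1 / (c * x ^ 2 + γ) ^ 2 := by rw [one_div]
      have e2 : (4 * (k⁻¹) ^ 2) * (((1 + x) ^ 2) ^ 2)⁻¹ = 4 / (k ^ 2 * ((1 + x) ^ 2) ^ 2) := by
        rw [inv_pow]; field_simp
      rw [inv_pow, e1, e2, div_le_div_iff₀ (by positivity) (by positivity), one_mul]
      calc k ^ 2 * ((1 + x) ^ 2) ^ 2 ≤ k ^ 2 * (2 * (1 + x ^ 2)) ^ 2 := by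
            refine mul_le_mul_of_nonneg_left (pow_le_pow_left₀ (by positivity) h1 2) (by positivity)
        _ = 4 * (k * (1 + x ^ 2)) ^ 2 := by ring
        _ ≤ 4 * (c * x ^ 2 + γ) ^ 2 := by
            refine mul_le_mul_of_nonneg_left (pow_le_pow_left₀ (by positivity) h2 2) (by norm_num)
    refine Integrable.mono' (g := fun t : E => (4 * (k⁻¹) ^ 2) * (1 + ‖t‖) ^ (-(4:ℝ))) ?_ ?_ ?_
    · refine Integrable.const_mul ?_ _
      refine integrable_one_add_norm ?_
      rw [hfr]; norm_num
    · refine Continuous.aestronglyMeasurable ?_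
      have : Continuous fun t : E => c * ‖t‖ ^ 2 + γ :=
        (continuous_const.mul (continuous_norm.pow 2)).add continuous_const
      exact (this.inv₀ fun t => (hpos ‖t‖).ne').pow 2
    · exact Filter.Eventually.of_forall hbd
  -- convert to Bochner integral
  rw [← ofReal_integral_eq_lintegral_ofReal hint
    (Filter.Eventually.of_forall fun t => by positivity)]
  congr 1
  -- polar coordinates
  have hradial := MeasureTheory.integral_fun_norm_addHaar (volume : Measure E)
    (fun y : ℝ => ((c * y ^ 2 + γ)⁻¹) ^ 2)
  rw [hfr] at hradial
  rw [hradial]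
  have hball : ((volume : Measure E) (Metric.ball 0 1)).toReal = Real.pi * (4 / 3) := by
    rw [show (Metric.ball (0:E) 1) = Metric.ball (0 : EuclideanSpace ℝ (Fin 3)) 1 from rfl]
    rw [EuclideanSpace.volume_ball]
    have hGamma : Real.Gamma ((Fintype.card (Fin 3) : ℝ) / 2 + 1) = 3 / 4 * Real.sqrt Real.pi := by
      have : ((Fintype.card (Fin 3) : ℝ) / 2 + 1) = 3 / 2 + 1 := by norm_num
      rw [this, Real.Gamma_add_one (by norm_num)]
      have : (3 : ℝ) / 2 = 1 / 2 + 1 := by norm_num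
      rw [this, Real.Gamma_add_one (by norm_num), Real.Gamma_one_half_eq]
      ring
    rw [hGamma]
    simp only [Fintype.card_fin, ENNReal.ofReal_one, one_pow, one_mul]
    rw [ENNReal.toReal_ofReal (by positivity)]
    have hsπ : Real.sqrt Real.pi ^ 2 = Real.pi := Real.sq_sqrt Real.pi_pos.le
    have h3 : Real.sqrt Real.pi ^ 3 = Real.pi * Real.sqrt Real.pi := by
      rw [pow_succ, hsπ]
    rw [h3, div_eq_iff (by positivity)]
    ring
  simp only [nsmul_eq_mul, smul_eq_mul, Nat.cast_ofNat, show (3:ℕ)-1 = 2 from rfl]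
  rw [measureReal_def, hball, aux1d hc hγ]
  ring

lemma measurable_update_comp {N : ℕ} (i : Fin N) {δ : Type*} [MeasurableSpace δ]
    {f : δ → E3} {g : δ → (Fin N → E3)} (hf : Measurable f) (hg : Measurable g) :
    Measurable fun x => Function.update (g x) i (f x) := by
  refine measurable_pi_lambda _ fun j => ?_
  rcases eq_or_ne j i with rfl | h
  · simpa using hf
  · simp only [Function.update_apply, if_neg h]
    exact (measurable_pi_apply j).comp hg

lemma measPres (N : ℕ) (i : Fin N) (a : ℝ) :
    MeasurePreserving
      (fun p : E3 × (Fin N → E3) =>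
        (a • p.2 i - p.1, Function.update p.2 i (p.1 + (1 - a) • p.2 i)))
      (volume.prod volume) (volume.prod volume) := by
  -- U : (t,q) ↦ (t - a • q i, q),  as swap ∘ U' ∘ swap with U'(q,t) = (q, t + (-(a • q i)))
  have hU' : MeasurePreserving
      (fun p : (Fin N → E3) × E3 => (p.1, p.2 + -(a • p.1 i)))
      (volume.prod volume) (volume.prod volume) := by
    have h := MeasurePreserving.skew_product (g := fun (q : Fin N → E3) (t : E3) => t + -(a • q i))
      (MeasurePreserving.id (volume : Measure (Fin N → E3)))
      (measurable_snd.add (((measurable_pi_apply i).comp measurable_fst).const_smul a).neg)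
      (Filter.Eventually.of_forall fun q =>
        (measurePreserving_add_right volume (-(a • q i))).map_eq)
    simpa using h
  have hU : MeasurePreserving
      (fun p : E3 × (Fin N → E3) => (p.1 - a • p.2 i, p.2))
      (volume.prod volume) (volume.prod volume) := by
    have hsw := (Measure.measurePreserving_swap).comp (hU'.comp (Measure.measurePreserving_swap
      (μ := (volume : Measure E3)) (ν := (volume : Measure (Fin N → E3)))))
    have heq : (Prod.swap ∘ (fun p : (Fin N → E3) × E3 => (p.1, p.2 + -(a • p.1 i))) ∘
        (Prod.swap : E3 × (Fin N → E3) → (Fin N → E3) × E3))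
        = fun p : E3 × (Fin N → E3) => (p.1 - a • p.2 i, p.2) := by
      funext p
      simp [Prod.swap, sub_eq_add_neg]
    exact heq ▸ hsw
  -- L : (t,q) ↦ (t, q + update 0 i t)
  have hL : MeasurePreserving
      (fun p : E3 × (Fin N → E3) => (p.1, p.2 + Function.update (0 : Fin N → E3) i p.1))
      (volume.prod volume) (volume.prod volume) := by
    have h := MeasurePreserving.skew_product
      (g := fun (t : E3) (q : Fin N → E3) => q + Function.update (0 : Fin N → E3) i t)
      (MeasurePreserving.id (volume : Measure E3))
      (measurable_snd.add
        ((measurable_update_comp i measurable_id measurable_const).comp measurable_fst))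
      (Filter.Eventually.of_forall fun t =>
        (measurePreserving_add_right volume (Function.update (0 : Fin N → E3) i t)).map_eq)
    simpa using h
  -- N : (t,q) ↦ (-t, q)
  have hN : MeasurePreserving
      (fun p : E3 × (Fin N → E3) => (-p.1, p.2))
      (volume.prod volume) (volume.prod volume) := by
    have h := (Measure.measurePreserving_neg (volume : Measure E3)).prod
      (MeasurePreserving.id (volume : Measure (Fin N → E3)))
    exact h
  have hcomp := hN.comp (hL.comp hU)
  have heq : ((fun p : E3 × (Fin N → E3) => (-p.1, p.2)) ∘
      (fun p : E3 × (Fin N → E3) => (p.1, p.2 + Function.update (0 : Fin N → E3) i p.1)) ∘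
      (fun p : E3 × (Fin N → E3) => (p.1 - a • p.2 i, p.2)))
      = fun p : E3 × (Fin N → E3) =>
        (a • p.2 i - p.1, Function.update p.2 i (p.1 + (1 - a) • p.2 i)) := by
    funext p
    refine Prod.ext ?_ ?_
    · show -(p.1 - a • p.2 i) = a • p.2 i - p.1
      abel
    · show p.2 + Function.update (0 : Fin N → E3) i (p.1 - a • p.2 i)
          = Function.update p.2 i (p.1 + (1 - a) • p.2 i)
      funext j
      rcases eq_or_ne j i with rfl | h
      · simp only [Pi.add_apply, Function.update_self]
        module
      · simp only [Pi.add_apply, Function.update_apply, if_neg h, Pi.zero_apply, add_zero]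
  exact heq ▸ hcomp

lemma normid {m : ℝ} (hm : 0 < m) (s t : E3) :
    (1/(2*m)) * ‖(m/(m+1)) • s - t‖^2 + (1/2) * ‖t + (1 - m/(m+1)) • s‖^2
      = (1+m)/(2*m) * ‖t‖^2 + ‖s‖^2/(2*(1+m)) := by
  have hm1 : (0:ℝ) < m + 1 := by linarith
  have ha : |m/(m+1)| = m/(m+1) := abs_of_pos (by positivity)
  have hbpos : (0:ℝ) < 1 - m/(m+1) := by
    rw [sub_pos]
    exact (div_lt_one hm1).2 (by linarith)
  have hb : |1 - m/(m+1)| = 1 - m/(m+1) := abs_of_pos hbpos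
  rw [norm_sub_sq_real, norm_add_sq_real, real_inner_smul_left, real_inner_smul_right,
    real_inner_comm, norm_smul, norm_smul]
  simp only [Real.norm_eq_abs, ha, hb, mul_pow]
  field_simp
  ring

/-- `L²` norm of `G_μ ξ_i`: with `G_μ(k₀,k⃗) = ((1/2m)k₀² + (1/2)k⃗² + μ)⁻¹`,
`‖G_μ ξ_i‖² = π² (2m/(m+1))^{3/2} ∫ |ξ̂(k_i,k̂_i)|² (k_i²/(2(1+m)) + (1/2)k̂_i² + μ)^{-1/2}`,
and in particular `‖G_μ ξ_i‖² ≤ π² (2m/(m+1))^{3/2} μ^{-1/2} ‖ξ‖²`. -/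
theorem stmt13 (N : ℕ) (i : Fin N) (m μ : ℝ) (hm : 0 < m) (hμ : 0 < μ)
    (ξ : (Fin N → EuclideanSpace ℝ (Fin 3)) → ℂ) (hξ : Measurable ξ) :
    (∫⁻ p : EuclideanSpace ℝ (Fin 3) × (Fin N → EuclideanSpace ℝ (Fin 3)),
        ENNReal.ofReal ((((1 / (2 * m)) * ‖p.1‖ ^ 2 + (1 / 2) * ∑ j, ‖p.2 j‖ ^ 2 + μ)⁻¹) ^ 2 *
          ‖ξ (Function.update p.2 i (p.1 + p.2 i))‖ ^ 2)) =
      ENNReal.ofReal (Real.pi ^ 2 * (2 * m / (m + 1)) ^ ((3 : ℝ) / 2)) *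
        ∫⁻ k : Fin N → EuclideanSpace ℝ (Fin 3),
          ENNReal.ofReal (‖ξ k‖ ^ 2 *
            (Real.sqrt (‖k i‖ ^ 2 / (2 * (1 + m)) +
              (1 / 2) * ∑ j ∈ Finset.univ.erase i, ‖k j‖ ^ 2 + μ))⁻¹) ∧
    (∫⁻ p : EuclideanSpace ℝ (Fin 3) × (Fin N → EuclideanSpace ℝ (Fin 3)),
        ENNReal.ofReal ((((1 / (2 * m)) * ‖p.1‖ ^ 2 + (1 / 2) * ∑ j, ‖p.2 j‖ ^ 2 + μ)⁻¹) ^ 2 *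
          ‖ξ (Function.update p.2 i (p.1 + p.2 i))‖ ^ 2)) ≤
      ENNReal.ofReal (Real.pi ^ 2 * (2 * m / (m + 1)) ^ ((3 : ℝ) / 2) * (Real.sqrt μ)⁻¹) *
        ∫⁻ k : Fin N → EuclideanSpace ℝ (Fin 3), ENNReal.ofReal (‖ξ k‖ ^ 2) := by
  classical
  have hm1 : (0:ℝ) < m + 1 := by linarith
  set c : ℝ := (1+m)/(2*m) with hcdef
  have hc : 0 < c := by positivity
  set K : ℝ := Real.pi ^ 2 * (2 * m / (m + 1)) ^ ((3 : ℝ) / 2) with hKdef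
  have hK : 0 ≤ K := by positivity
  set γf : (Fin N → E3) → ℝ := fun q =>
    ‖q i‖ ^ 2 / (2 * (1 + m)) + (1 / 2) * ∑ j ∈ Finset.univ.erase i, ‖q j‖ ^ 2 + μ with hγdef
  have hsum_nonneg : ∀ q : Fin N → E3, (0:ℝ) ≤ ∑ j ∈ Finset.univ.erase i, ‖q j‖ ^ 2 :=
    fun q => Finset.sum_nonneg fun j _ => by positivity
  have hγμ : ∀ q, μ ≤ γf q := by
    intro q
    have h1 : (0:ℝ) ≤ ‖q i‖ ^ 2 / (2 * (1 + m)) := by positivity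
    have h2 := hsum_nonneg q
    simp only [hγdef]
    linarith
  have hγpos : ∀ q, 0 < γf q := fun q => lt_of_lt_of_le hμ (hγμ q)
  -- measurability of γf
  have hγm : Measurable γf := by
    refine Measurable.add (Measurable.add ?_ ?_) measurable_const
    · exact ((measurable_pi_apply i).norm.pow_const 2).div_const _
    · exact (Finset.measurable_sum _ fun j _ =>
        (measurable_pi_apply j).norm.pow_const 2).const_mul _
  -- the integrand
  set f : E3 × (Fin N → E3) → ℝ≥0∞ := fun p =>
    ENNReal.ofReal ((((1 / (2 * m)) * ‖p.1‖ ^ 2 + (1 / 2) * ∑ j, ‖p.2 j‖ ^ 2 + μ)⁻¹) ^ 2 *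
      ‖ξ (Function.update p.2 i (p.1 + p.2 i))‖ ^ 2) with hfdef
  have hmf : Measurable f := by
    refine Measurable.ennreal_ofReal (Measurable.mul ?_ ?_)
    · refine Measurable.pow_const (Measurable.inv ?_) 2
      refine Measurable.add (Measurable.add ?_ ?_) measurable_const
      · exact (measurable_fst.norm.pow_const 2).const_mul _
      · exact (Finset.measurable_sum _ fun j _ =>
          ((measurable_pi_apply j).comp measurable_snd).norm.pow_const 2).const_mul _
    · refine Measurable.pow_const (Measurable.norm ?_) 2
      exact hξ.comp (measurable_update_comp i
        (measurable_fst.add ((measurable_pi_apply i).comp measurable_snd)) measurable_snd)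
  -- the simplified integrand
  set g : E3 × (Fin N → E3) → ℝ≥0∞ := fun p =>
    ENNReal.ofReal (((c * ‖p.1‖ ^ 2 + γf p.2)⁻¹) ^ 2 * ‖ξ p.2‖ ^ 2) with hgdef
  have hmg : Measurable g := by
    refine Measurable.ennreal_ofReal (Measurable.mul ?_ ?_)
    · exact (((measurable_fst.norm.pow_const 2).const_mul c).add
        (hγm.comp measurable_snd)).inv.pow_const 2
    · exact ((hξ.comp measurable_snd).norm.pow_const 2)
  -- change of variables
  have hΦ := measPres N i (m/(m+1))
  have hident : ∀ p : E3 × (Fin N → E3),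
      f ((m/(m+1)) • p.2 i - p.1, Function.update p.2 i (p.1 + (1 - m/(m+1)) • p.2 i)) = g p := by
    rintro ⟨t, q⟩
    simp only [hfdef, hgdef]
    set s := q i with hs
    set v : E3 := t + (1 - m/(m+1)) • s with hv
    congr 1
    -- the ξ argument
    have harg : Function.update (Function.update q i v) i
        (((m/(m+1)) • s - t) + Function.update q i v i) = q := by
      rw [Function.update_self, Function.update_idem]
      have : ((m/(m+1)) • s - t) + v = q i := by
        rw [hv, hs]; module
      rw [this, Function.update_eq_self]
    -- the sum
    have hsum : ∑ j, ‖Function.update q i v j‖ ^ 2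
        = ‖v‖ ^ 2 + ∑ j ∈ Finset.univ.erase i, ‖q j‖ ^ 2 := by
      have h1 : ∀ j, ‖Function.update q i v j‖ ^ 2
          = Function.update (fun j => ‖q j‖ ^ 2) i (‖v‖ ^ 2) j := fun j =>
        congrArg (· ^ 2) (congrArg norm (Function.update_apply q i v j)) |>.trans
          (by simp [Function.update_apply]; split <;> simp)
      rw [Finset.sum_congr rfl fun j _ => h1 j, Finset.sum_update_of_mem (Finset.mem_univ i),
        Finset.sdiff_singleton_eq_erase]
    rw [harg, hsum]
    have hnorm := normid hm s t
    have : (1 / (2 * m)) * ‖(m/(m+1)) • s - t‖ ^ 2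
        + (1 / 2) * (‖v‖ ^ 2 + ∑ j ∈ Finset.univ.erase i, ‖q j‖ ^ 2) + μ
        = c * ‖t‖ ^ 2 + γf q := by
      have hc2 : c * ‖t‖ ^ 2 = (1+m)/(2*m) * ‖t‖ ^ 2 := by rw [hcdef]
      simp only [hγdef]
      rw [hv, ← hs]
      linarith [hnorm]
    rw [this]
  have key : (Real.sqrt c)⁻¹ ^ 3 = (2 * m / (m + 1)) ^ ((3 : ℝ) / 2) := by
    have h1 : (Real.sqrt c)⁻¹ = Real.sqrt (2 * m / (m + 1)) := by
      rw [← Real.sqrt_inv, hcdef]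
      congr 1
      rw [inv_div]
      ring_nf
    rw [h1]
    rw [show ((3 : ℝ) / 2) = (1/2) * ((3:ℕ):ℝ) by norm_num,
      Real.rpow_mul (by positivity), Real.rpow_natCast, ← Real.sqrt_eq_rpow]
  -- main computation
  have hmain : (∫⁻ p : E3 × (Fin N → E3), f p) =
      ENNReal.ofReal K * ∫⁻ k : Fin N → E3,
        ENNReal.ofReal (‖ξ k‖ ^ 2 * (Real.sqrt (γf k))⁻¹) := by
    rw [Measure.volume_eq_prod, ← hΦ.lintegral_comp hmf]
    have : ∀ p : E3 × (Fin N → E3),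
        f ((m/(m+1)) • p.2 i - p.1, Function.update p.2 i (p.1 + (1 - m/(m+1)) • p.2 i)) = g p :=
      hident
    rw [lintegral_congr this]
    rw [lintegral_prod_symm g hmg.aemeasurable]
    have hinner : ∀ q : Fin N → E3, (∫⁻ t : E3, g (t, q)) =
        ENNReal.ofReal K * ENNReal.ofReal (‖ξ q‖ ^ 2 * (Real.sqrt (γf q))⁻¹) := by
      intro q
      have e1 : ∀ t : E3, g (t, q)
          = ENNReal.ofReal (((c * ‖t‖ ^ 2 + γf q)⁻¹) ^ 2) * ENNReal.ofReal (‖ξ q‖ ^ 2) := by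
        intro t
        simp only [hgdef]
        rw [ENNReal.ofReal_mul (by positivity)]
      rw [lintegral_congr e1, lintegral_mul_const' _ _ ENNReal.ofReal_ne_top,
        aux3d hc (hγpos q), ← ENNReal.ofReal_mul (by positivity),
        ← ENNReal.ofReal_mul hK]
      congr 1
      rw [hKdef, key]
      ring
    rw [lintegral_congr hinner]
    rw [lintegral_const_mul' _ _ ENNReal.ofReal_ne_top]
  refine ⟨hmain, ?_⟩
  rw [hmain]
  rw [ENNReal.ofReal_mul hK, mul_assoc]
  refine mul_le_mul_right ?_ _
  rw [← lintegral_const_mul' _ _ ENNReal.ofReal_ne_top]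
  refine lintegral_mono fun q => ?_
  rw [← ENNReal.ofReal_mul (by positivity)]
  refine ENNReal.ofReal_le_ofReal ?_
  rw [mul_comm ((Real.sqrt μ)⁻¹)]
  refine mul_le_mul_of_nonneg_left ?_ (by positivity)
  refine inv_anti₀ (Real.sqrt_pos.2 hμ) (Real.sqrt_le_sqrt (hγμ q))
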